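/- Let $f > 1$ be even and $p > 3$, and let $1 \le r_j \le p-3$ for all $j$. For each $1 \le k \le 2f$, let $\sigma_k$ denote the weight parameter $\bm\mu^{(k)}(\bm r) \in \{0, \ldots, p-1\}^f$ and define the involution $\bm s \mapsto \bm s^{[s]}$ on tuples by $(s_0, \ldots, s_{f-1})^{[s]} = (p-1-s_0, \ldots, p-1-s_{f-1})$. Then $\bm\mu^{(k)}(\bm r) \ne (\bm\mu^{(k+f)}(\bm r))^{[s]}$ for all $1 \le k \le f$. -/

import Mathlib

/-- Cyclic shift `g` on `f`-tuples of linear polynomials (represented as functions `ℤ → ℤ`),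
moving the `j`-th entry of the input to position `j + 1` (indices in `ZMod f`), i.e.
`(g lam) j = lam (j + 1)` — the convention under which the paper's recursion (1) and the
explicit tuples hold. -/
def shiftT {f : ℕ} (lam : ZMod f → ℤ → ℤ) : ZMod f → ℤ → ℤ :=
  fun j => lam (j + 1)

/-- The tuple `μ = (x - 1, p - 2 - x, p - 1 - x, …, p - 1 - x)`. -/
def muT (p : ℤ) (f : ℕ) : ZMod f → ℤ → ℤ :=
  fun j x => if j = 0 then x - 1 else if j = 1 then p - 2 - x else p - 1 - x

/-- `μ⁽⁰⁾ = (x, …, x)` and `μ⁽ᵏ⁾ = gᵏ⁻¹ μ ∘ μ⁽ᵏ⁻¹⁾` (entrywise composition). -/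
def muIter (p : ℤ) (f : ℕ) : ℕ → ZMod f → ℤ → ℤ
  | 0 => fun _ x => x
  | k + 1 => fun j x => (shiftT^[k] (muT p f)) j (muIter p f k j x)

/-- `l = f` if `f` is odd, `l = 2f` if `f` is even. -/
def lVal (f : ℕ) : ℕ := if f % 2 = 1 then f else 2 * f


lemma shiftT_iter {f : ℕ} (n : ℕ) (lam : ZMod f → ℤ → ℤ) (j : ZMod f) :
    (shiftT^[n] lam) j = lam (j + n) := by
  induction n generalizing lam j with
  | zero => simp
  | succ n ih =>
      rw [Function.iterate_succ_apply, ih, shiftT]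
      push_cast
      ring_nf

lemma muIter_succ (p : ℤ) (f : ℕ) (n : ℕ) (j : ZMod f) (x : ℤ) :
    muIter p f (n + 1) j x = muT p f (j + n) (muIter p f n j x) := by
  show (shiftT^[n] (muT p f)) j (muIter p f n j x) = _
  rw [shiftT_iter]

lemma cast_ne_zero_one {f n : ℕ} (hf : 1 < f) (h2 : 2 ≤ n) (hlt : n < f) :
    ((n : ZMod f) ≠ 0 ∧ (n : ZMod f) ≠ 1) := by
  haveI : Fact (1 < f) := ⟨hf⟩
  constructor
  · intro h
    have := ZMod.val_natCast_of_lt hlt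
    rw [h, ZMod.val_zero] at this
    omega
  · intro h
    have := ZMod.val_natCast_of_lt hlt
    rw [h, ZMod.val_one] at this
    omega

/-- for even `f > 1` and `1 ≤ rⱼ ≤ p - 3`, the evaluated tuple `μ⁽ᵏ⁾(r)` is not
the image of `μ⁽ᵏ⁺ᶠ⁾(r)` under the involution `s ↦ (p-1-s₀, …, p-1-s_{f-1})`, for `1 ≤ k ≤ f`. -/
theorem muIter_eval_ne_involution (p : ℤ) (f : ℕ) (hf : 1 < f) (heven : Even f) (hp : 3 < p)
    (r : ZMod f → ℤ) (hr : ∀ j, 1 ≤ r j ∧ r j ≤ p - 3) :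
    ∀ k : ℕ, 1 ≤ k → k ≤ f →
      (fun j : ZMod f => muIter p f k j (r j))
        ≠ fun j : ZMod f => p - 1 - muIter p f (k + f) j (r j) := by
  intro k hk1 hk2 h
  haveI : Fact (1 < f) := ⟨hf⟩
  set j : ZMod f := 1 - (k : ℕ) with hj
  set y : ℤ := muIter p f k j (r j) with hy
  -- middle lemma
  have mid : ∀ i : ℕ, 1 ≤ i → i ≤ f - 1 →
      muIter p f (k + i) j (r j) = if i % 2 = 1 then p - 2 - y else 1 + y := by
    intro i hi1 hi2
    induction i with
    | zero => omega
    | succ i ih =>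
        rcases Nat.eq_or_lt_of_le hi1 with h1 | h1
        · -- i + 1 = 1, base case
          have hi0 : i = 0 := by omega
          subst hi0
          rw [muIter_succ]
          have hidx : j + (k : ZMod f) = 1 := by rw [hj]; ring
          rw [hidx, muT]
          simp only [one_ne_zero, if_false, if_true, if_pos rfl]
          rfl
        · -- i ≥ 1
          have hi' : 1 ≤ i := by omega
          have hi2' : i ≤ f - 1 := by omega
          have hrec := ih hi' hi2'
          have hstep : muIter p f (k + (i + 1)) j (r j)
              = muT p f (j + ((k + i : ℕ) : ZMod f)) (muIter p f (k + i) j (r j)) := by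
            have : k + (i + 1) = (k + i) + 1 := by ring
            rw [this, muIter_succ]
          have hidx : j + ((k + i : ℕ) : ZMod f) = ((1 + i : ℕ) : ZMod f) := by
            rw [hj]; push_cast; ring
          have hcast := cast_ne_zero_one hf (n := 1 + i) (by omega) (by omega)
          rw [hstep, hidx, muT, if_neg hcast.1, if_neg hcast.2, hrec]
          rcases Nat.even_or_odd i with he | ho
          · have : i % 2 = 0 := Nat.even_iff.mp he
            have : (i+1) % 2 = 1 := by omega
            simp [*]
            ring
          · have : i % 2 = 1 := Nat.odd_iff.mp ho
            have : (i+1) % 2 = 0 := by omega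
            simp [*]
            ring
  -- final step
  have hf1 : f - 1 ≥ 1 := by omega
  have hmid := mid (f - 1) hf1 le_rfl
  have hodd : (f - 1) % 2 = 1 := by
    obtain ⟨m, hm⟩ := heven; omega
  rw [if_pos hodd] at hmid
  have hfinal : muIter p f (k + f) j (r j) = p - 3 - y := by
    have hstep : k + f = (k + (f - 1)) + 1 := by omega
    rw [hstep, muIter_succ]
    have hidx : j + ((k + (f-1) : ℕ) : ZMod f) = 0 := by
      rw [hj]
      push_cast
      have : ((f - 1 : ℕ) : ZMod f) = (f : ZMod f) - 1 := by
        push_cast [Nat.cast_sub (by omega : 1 ≤ f)]; ring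
      rw [this, ZMod.natCast_self]
      ring
    rw [hidx, muT, if_pos rfl, hmid]
    ring
  have := congrFun h j
  simp only [hfinal] at this
  rw [← hy] at this
  linarith
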